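/- (Trace inverse inequality, Lemma 3.1b.) For every natural number k there exists a positive constant C_t, depending only on k, such that for every h > 0 and every real polynomial p of degree at most k, max{(p(0))², (p(h))²} ≤ C_t h^{-1} ∫₀^h (p(x))² dx. -/

import Mathlib

open Polynomial MeasureTheory

noncomputable def gfun (k : ℕ) (a : EuclideanSpace ℝ (Fin (k+1))) : ℝ :=
  ∫ x in (0:ℝ)..1, (∑ i : Fin (k+1), a i * x ^ (i:ℕ)) ^ 2

lemma gfun_eq (k : ℕ) (a : EuclideanSpace ℝ (Fin (k+1))) :
    gfun k a = ∑ i : Fin (k+1), ∑ j : Fin (k+1),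
      a i * a j * (1 / ((i:ℕ) + (j:ℕ) + 1)) := by
  unfold gfun
  have h1 : ∀ x : ℝ, (∑ i : Fin (k+1), a i * x ^ (i:ℕ)) ^ 2
      = ∑ i : Fin (k+1), ∑ j : Fin (k+1), a i * a j * x ^ ((i:ℕ) + (j:ℕ)) := by
    intro x
    rw [sq, Finset.sum_mul_sum]
    apply Finset.sum_congr rfl; intro i _
    apply Finset.sum_congr rfl; intro j _
    ring
  simp_rw [h1]
  rw [intervalIntegral.integral_finset_sum]
  · apply Finset.sum_congr rfl; intro i _
    rw [intervalIntegral.integral_finset_sum]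
    · apply Finset.sum_congr rfl; intro j _
      rw [intervalIntegral.integral_const_mul, integral_pow]
      push_cast; simp
    · intro j _
      exact (Continuous.intervalIntegrable (by continuity) _ _)
  · intro i _
    exact (Continuous.intervalIntegrable (by continuity) _ _)

lemma gfun_continuous (k : ℕ) : Continuous (gfun k) := by
  have : gfun k = fun a : EuclideanSpace ℝ (Fin (k+1)) => ∑ i : Fin (k+1), ∑ j : Fin (k+1),
      a i * a j * (1 / ((i:ℕ) + (j:ℕ) + 1)) := by
    funext a; exact gfun_eq k a
  rw [this]
  fun_prop

lemma gfun_pos (k : ℕ) (a : EuclideanSpace ℝ (Fin (k+1))) (ha : a ≠ 0) : 0 < gfun k a := by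
  set p : Polynomial ℝ := ∑ i : Fin (k+1), Polynomial.C (a i) * Polynomial.X ^ (i:ℕ) with hp
  have hev : ∀ x : ℝ, p.eval x = ∑ i : Fin (k+1), a i * x ^ (i:ℕ) := by
    intro x; simp [hp, Polynomial.eval_finset_sum]
  have hpne : p ≠ 0 := by
    intro h0
    apply ha
    ext i
    have := congrArg (fun q => Polynomial.coeff q (i:ℕ)) h0
    simp only [hp, Polynomial.finset_sum_coeff, Polynomial.coeff_C_mul,
      Polynomial.coeff_X_pow, Polynomial.coeff_zero] at this
    rw [Finset.sum_eq_single i] at this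
    · simpa using this
    · intro j _ hj
      have : (i:ℕ) ≠ (j:ℕ) := fun h => hj (Fin.ext h.symm)
      simp [this]
    · simp
  have hroots : {x : ℝ | p.IsRoot x}.Finite := p.finite_setOf_isRoot hpne
  have hicc : (Set.Icc (0:ℝ) 1).Infinite := Set.infinite_coe_iff.mp (Set.Icc.infinite (by norm_num))
  obtain ⟨c, hc, hcr⟩ := (hicc.diff hroots).nonempty
  have : gfun k a = ∫ x in (0:ℝ)..1, (p.eval x) ^ 2 := by
    unfold gfun; simp_rw [hev]
  rw [this]
  apply intervalIntegral.integral_pos (by norm_num)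
  · exact (Continuous.continuousOn (by continuity))
  · intro x _; positivity
  · exact ⟨c, hc, by
      have : p.eval c ≠ 0 := hcr
      positivity⟩

lemma gfun_smul (k : ℕ) (c : ℝ) (a : EuclideanSpace ℝ (Fin (k+1))) :
    gfun k (c • a) = c ^ 2 * gfun k a := by
  rw [gfun_eq, gfun_eq, Finset.mul_sum]
  apply Finset.sum_congr rfl; intro i _
  rw [Finset.mul_sum]
  apply Finset.sum_congr rfl; intro j _
  have : (c • a) i = c * a i := rfl
  have h2 : (c • a) j = c * a j := rfl
  rw [this, h2]; ring

lemma keyA (k : ℕ) : ∃ m : ℝ, 0 < m ∧ ∀ a : EuclideanSpace ℝ (Fin (k+1)),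
    m * (∑ i : Fin (k+1), (a i) ^ 2) ≤ gfun k a := by
  have hne : (Metric.sphere (0 : EuclideanSpace ℝ (Fin (k+1))) 1).Nonempty :=
    NormedSpace.sphere_nonempty.mpr (by norm_num)
  obtain ⟨a₀, ha₀s, hmin⟩ := (isCompact_sphere (0 : EuclideanSpace ℝ (Fin (k+1))) 1).exists_isMinOn
    hne (gfun_continuous k).continuousOn
  have ha₀ : a₀ ≠ 0 := by
    intro h; rw [h] at ha₀s; simp at ha₀s
  refine ⟨gfun k a₀, gfun_pos k a₀ ha₀, ?_⟩
  intro a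
  rcases eq_or_ne a 0 with rfl | ha
  · simp [gfun_eq]
  · have hna : (0:ℝ) < ‖a‖ := norm_pos_iff.mpr ha
    have hb : (‖a‖⁻¹ • a) ∈ Metric.sphere (0 : EuclideanSpace ℝ (Fin (k+1))) 1 := by
      simp [norm_smul, abs_of_pos (inv_pos.mpr hna), inv_mul_cancel₀ hna.ne']
    have h1 : gfun k a₀ ≤ gfun k (‖a‖⁻¹ • a) := hmin hb
    have h2 : gfun k (‖a‖⁻¹ • a) = ‖a‖⁻¹ ^ 2 * gfun k a := gfun_smul k _ a
    have hnorm : ∑ i : Fin (k+1), (a i) ^ 2 = ‖a‖ ^ 2 := by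
      rw [EuclideanSpace.norm_eq, Real.sq_sqrt (by positivity)]
      apply Finset.sum_congr rfl; intro i _
      rw [Real.norm_eq_abs, sq_abs]
    rw [hnorm]
    have := mul_le_mul_of_nonneg_left (h2 ▸ h1) (le_of_lt (by positivity : (0:ℝ) < ‖a‖ ^ 2))
    calc gfun k a₀ * ‖a‖ ^ 2 = ‖a‖ ^ 2 * gfun k a₀ := by ring
    _ ≤ ‖a‖ ^ 2 * (‖a‖⁻¹ ^ 2 * gfun k a) := this
    _ = gfun k a := by field_simp

lemma keyB (k : ℕ) : ∃ C : ℝ, 0 < C ∧ ∀ p : Polynomial ℝ, p.degree ≤ k →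
    max ((p.eval 0) ^ 2) ((p.eval 1) ^ 2) ≤ C * ∫ x in (0:ℝ)..1, (p.eval x) ^ 2 := by
  obtain ⟨m, hm, hkey⟩ := keyA k
  refine ⟨(k+1) / m, by positivity, ?_⟩
  intro p hdeg
  set a : EuclideanSpace ℝ (Fin (k+1)) := WithLp.toLp 2 (fun i => p.coeff i) with ha
  have hnd : p.natDegree < k + 1 :=
    Nat.lt_succ_of_le (Polynomial.natDegree_le_iff_degree_le.mpr hdeg)
  have hev : ∀ x : ℝ, p.eval x = ∑ i : Fin (k+1), a i * x ^ (i:ℕ) := by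
    intro x
    rw [Polynomial.eval_eq_sum_range' hnd, ← Fin.sum_univ_eq_sum_range]
  have hg : gfun k a = ∫ x in (0:ℝ)..1, (p.eval x) ^ 2 := by
    unfold gfun; simp_rw [hev]
  have hsum : (∑ i : Fin (k+1), (a i) ^ 2) ≤ (1 / m) * ∫ x in (0:ℝ)..1, (p.eval x) ^ 2 := by
    rw [← hg, one_div, inv_mul_eq_div, le_div_iff₀ hm, mul_comm]
    exact hkey a
  have h0 : (p.eval 0) ^ 2 ≤ ∑ i : Fin (k+1), (a i) ^ 2 := by
    have : p.eval 0 = a 0 := by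
      simp [ha, ← Polynomial.coeff_zero_eq_eval_zero]
    rw [this]
    exact Finset.single_le_sum (fun i _ => sq_nonneg (a i)) (Finset.mem_univ 0)
  have h1 : (p.eval 1) ^ 2 ≤ (k+1) * ∑ i : Fin (k+1), (a i) ^ 2 := by
    have he1 : p.eval 1 = ∑ i : Fin (k+1), a i := by
      rw [hev 1]; simp
    rw [he1]
    have := Finset.sum_mul_sq_le_sq_mul_sq Finset.univ a (fun _ => (1:ℝ))
    simpa [mul_comm] using this
  have hInonneg : 0 ≤ ∫ x in (0:ℝ)..1, (p.eval x) ^ 2 := by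
    apply intervalIntegral.integral_nonneg (by norm_num)
    intro x _; positivity
  have hk1 : (1:ℝ) ≤ (k:ℝ) + 1 := le_add_of_nonneg_left (Nat.cast_nonneg k)
  rw [max_le_iff]
  constructor
  · calc (p.eval 0)^2 ≤ ∑ i : Fin (k+1), (a i) ^ 2 := h0
      _ ≤ (k+1) * ∑ i : Fin (k+1), (a i) ^ 2 := by nlinarith [Finset.sum_nonneg (fun i (_ : i ∈ Finset.univ) => sq_nonneg (a i))]
      _ ≤ (k+1) * ((1/m) * ∫ x in (0:ℝ)..1, (p.eval x) ^ 2) := by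
          apply mul_le_mul_of_nonneg_left hsum (by positivity)
      _ = (k+1)/m * ∫ x in (0:ℝ)..1, (p.eval x) ^ 2 := by ring
  · calc (p.eval 1)^2 ≤ (k+1) * ∑ i : Fin (k+1), (a i) ^ 2 := h1
      _ ≤ (k+1) * ((1/m) * ∫ x in (0:ℝ)..1, (p.eval x) ^ 2) := by
          apply mul_le_mul_of_nonneg_left hsum (by positivity)
      _ = (k+1)/m * ∫ x in (0:ℝ)..1, (p.eval x) ^ 2 := by ring

/-- **Trace inverse inequality (Lemma 3.1b).** For every natural number `k` there exists a
positive constant `C` (depending only on `k`) such that for every `h > 0` and every real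
polynomial `p` of degree at most `k`,
`max{(p(0))², (p(h))²} ≤ C h⁻¹ ∫₀^h (p(x))² dx`. -/
theorem trace_inverse_inequality (k : ℕ) :
    ∃ C : ℝ, 0 < C ∧ ∀ h : ℝ, 0 < h → ∀ p : Polynomial ℝ, p.degree ≤ k →
      max ((p.eval 0) ^ 2) ((p.eval h) ^ 2)
        ≤ C / h * ∫ x in (0:ℝ)..h, (p.eval x) ^ 2 := by
  obtain ⟨C, hC, hkey⟩ := keyB k
  refine ⟨C, hC, ?_⟩
  intro h hh p hdeg
  set q : Polynomial ℝ := p.comp (Polynomial.C h * Polynomial.X) with hq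
  have hqdeg : q.degree ≤ k := by
    refine Polynomial.degree_le_natDegree.trans ?_
    rw [Nat.cast_le, hq, Polynomial.natDegree_comp, Polynomial.natDegree_C_mul_X h hh.ne',
      mul_one]
    exact Polynomial.natDegree_le_iff_degree_le.mpr hdeg
  have hqev : ∀ y : ℝ, q.eval y = p.eval (h * y) := by
    intro y; simp [hq, Polynomial.eval_comp]
  have hint : ∫ y in (0:ℝ)..1, (q.eval y) ^ 2
      = h⁻¹ * ∫ x in (0:ℝ)..h, (p.eval x) ^ 2 := by
    simp_rw [hqev]
    rw [intervalIntegral.integral_comp_mul_left (fun x => (p.eval x)^2) hh.ne']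
    simp [smul_eq_mul]
  have := hkey q hqdeg
  rw [hqev 0, hqev 1, mul_zero, mul_one, hint] at this
  calc max ((p.eval 0) ^ 2) ((p.eval h) ^ 2)
      ≤ C * (h⁻¹ * ∫ x in (0:ℝ)..h, (p.eval x) ^ 2) := this
    _ = C / h * ∫ x in (0:ℝ)..h, (p.eval x) ^ 2 := by ring
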